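/- For a randomized adaptive policy π^ag(ω), define X_i(ω) := E_Φ[Δ(π^ag_i(ω) | Ψ_{i-1}(ω,Φ))] / E_Φ[max_e Δ(e | Ψ_{i-1}(ω,Φ))]. If f is adaptive monotone and adaptive submodular, then for every fixed ω, f_avg(π^ag_r(ω)) ≥ (1 − e^{−X(ω)}) · f_avg(π*(ω)) where X(ω) = (1/r)Σ_{i=1}^r X_i(ω) and π* is any policy selecting at most r items. -/

import Mathlib

set_option linter.unusedSectionVars false
set_option linter.unusedVariables false


open Finset
open scoped Classical

section Adaptive

variable {E O : Type*} [Fintype E] [Fintype O] [DecidableEq E] [Nonempty E]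

/-- A partial realization: a partial assignment of states to items. -/
abbrev PReal (E O : Type*) := E → Option O

/-- A (full) realization `φ` is consistent with a partial realization `ψ`
(written `φ ∼ ψ`) if `φ` agrees with `ψ` on the domain of `ψ`. -/
def consistentR (φ : E → O) (ψ : PReal E O) : Prop := ∀ e o, ψ e = some o → φ e = o

/-- The domain of a partial realization, i.e. the set of items already selected. -/
noncomputable def pdom (ψ : PReal E O) : Finset E :=
  Finset.univ.filter fun e => (ψ e).isSome

/-- The probability `Pr[Φ ∼ ψ]` that the random realization is consistent with `ψ`. -/
noncomputable def prMass (p : (E → O) → ℝ) (ψ : PReal E O) : ℝ :=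
  ∑ φ ∈ Finset.univ.filter (fun φ => consistentR φ ψ), p φ

/-- The conditional expected marginal benefit `Δ(e | ψ)` of item `e` given the
partial realization `ψ`. -/
noncomputable def marginal (p : (E → O) → ℝ) (f : Finset E → (E → O) → ℝ)
    (e : E) (ψ : PReal E O) : ℝ :=
  (∑ φ ∈ Finset.univ.filter (fun φ => consistentR φ ψ),
      p φ * (f (insert e (pdom ψ)) φ - f (pdom ψ) φ)) / prMass p ψ

/-- `max_e Δ(e | ψ)`, the best single-item conditional marginal benefit. -/
noncomputable def maxMarginal (p : (E → O) → ℝ) (f : Finset E → (E → O) → ℝ)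
    (ψ : PReal E O) : ℝ :=
  Finset.univ.sup' Finset.univ_nonempty (fun e => marginal p f e ψ)

/-- Adaptive monotonicity: `Δ(e | ψ) ≥ 0` for every `e` and every `ψ` with
`Pr[Φ ∼ ψ] > 0`. -/
def AdaptiveMonotone (p : (E → O) → ℝ) (f : Finset E → (E → O) → ℝ) : Prop :=
  ∀ ψ : PReal E O, 0 < prMass p ψ → ∀ e : E, 0 ≤ marginal p f e ψ

/-- `ψ` is a subrealization of `ψ'`. -/
def subreal (ψ ψ' : PReal E O) : Prop := ∀ e o, ψ e = some o → ψ' e = some o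

/-- Adaptive submodularity: `Δ(e | ψ) ≥ Δ(e | ψ')` whenever `ψ ⊆ ψ'` and
`e ∉ dom(ψ')`. -/
def AdaptiveSubmodular (p : (E → O) → ℝ) (f : Finset E → (E → O) → ℝ) : Prop :=
  ∀ ψ ψ' : PReal E O, subreal ψ ψ' → ∀ e ∉ pdom ψ', marginal p f e ψ' ≤ marginal p f e ψ

/-- A deterministic adaptive policy: picks the next item from the current
partial realization. -/
abbrev Policy (E O : Type*) := PReal E O → E

/-- `runP π φ i = Ψ_i(π, φ)`: the partial realization observed after policy `π`
selects its first `i` items under realization `φ`. -/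
noncomputable def runP (π : Policy E O) (φ : E → O) : ℕ → PReal E O
  | 0 => fun _ => none
  | (i + 1) =>
      Function.update (runP π φ i) (π (runP π φ i)) (some (φ (π (runP π φ i))))

/-- `favg p f π i = f_avg(π_i)`: the expected utility of the truncated policy `π_i`. -/
noncomputable def favg (p : (E → O) → ℝ) (f : Finset E → (E → O) → ℝ)
    (π : Policy E O) (i : ℕ) : ℝ :=
  ∑ φ : E → O, p φ * f (pdom (runP π φ i)) φ

end Adaptive



section Aux

variable {E O : Type*} [Fintype E] [Fintype O] [DecidableEq E] [Nonempty E]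

lemma RAR.consistent_runP (π : Policy E O) (φ : E → O) (n : ℕ) :
    consistentR φ (runP π φ n) := by
  induction n with
  | zero => intro e o h; simp [runP] at h
  | succ n ih =>
    intro e o h
    simp only [runP] at h
    by_cases he : e = π (runP π φ n)
    · subst he; rw [Function.update_self] at h; exact Option.some_inj.mp h |>.symm ▸ rfl
    · rw [Function.update_of_ne he] at h; exact ih e o h

lemma RAR.runP_eq_of_consistent (π : Policy E O) (φ φ' : E → O) (n : ℕ)
    (h : consistentR φ' (runP π φ n)) : runP π φ' n = runP π φ n := by
  induction n with
  | zero => rfl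
  | succ n ih =>
    have hψ : consistentR φ' (runP π φ n) := by
      intro e o he
      by_cases hc : e = π (runP π φ n)
      · have h1 : φ e = o := RAR.consistent_runP π φ n e o he
        have h2 : φ' e = φ e := by
          apply h e (φ e)
          simp only [runP]
          rw [hc, Function.update_self]
        rw [h2, h1]
      · apply h e o
        simp only [runP]
        rw [Function.update_of_ne hc]; exact he
    have heq := ih hψ
    have hφe : φ' (π (runP π φ n)) = φ (π (runP π φ n)) := by
      apply h (π (runP π φ n)) (φ (π (runP π φ n)))
      simp only [runP]
      rw [Function.update_self]
    simp only [runP, heq, hφe]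

lemma RAR.pdom_update (ψ : PReal E O) (e : E) (o : O) :
    pdom (Function.update ψ e (some o)) = insert e (pdom ψ) := by
  ext e'
  simp only [pdom, mem_filter, mem_univ, true_and, mem_insert]
  by_cases h : e' = e
  · subst h; simp [Function.update_self]
  · simp [Function.update_of_ne h, h]

def RAR.punion (ψ₁ ψ₂ : PReal E O) : PReal E O := fun e => (ψ₁ e).or (ψ₂ e)

lemma RAR.punion_none (ψ : PReal E O) : RAR.punion ψ (fun _ => none) = ψ := by
  funext e; cases h : ψ e <;> simp [RAR.punion, h]

lemma RAR.consistentR_punion {φ : E → O} {ψ₁ ψ₂ : PReal E O}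
    (h1 : consistentR φ ψ₁) (h2 : consistentR φ ψ₂) :
    consistentR φ (RAR.punion ψ₁ ψ₂) := by
  intro e o h
  cases hc : ψ₁ e with
  | none => simp only [RAR.punion, hc, Option.or] at h; exact h2 e o h
  | some a =>
    simp only [RAR.punion, hc, Option.or] at h
    exact (Option.some_inj.mp h) ▸ h1 e a hc

lemma RAR.consistent_left_of_punion {φ' : E → O} {ψ₁ ψ₂ : PReal E O}
    (h : consistentR φ' (RAR.punion ψ₁ ψ₂)) : consistentR φ' ψ₁ := by
  intro e o he; exact h e o (by simp [RAR.punion, he])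

lemma RAR.consistent_right_of_punion {φ φ' : E → O} {ψ₁ ψ₂ : PReal E O}
    (h : consistentR φ' (RAR.punion ψ₁ ψ₂))
    (h1 : consistentR φ ψ₁) (h2 : consistentR φ ψ₂) : consistentR φ' ψ₂ := by
  intro e o he
  cases hc : ψ₁ e with
  | none => exact h e o (by simp [RAR.punion, hc, he])
  | some a =>
    have ha : φ' e = a := h e a (by simp [RAR.punion, hc])
    have h1a : φ e = a := h1 e a hc
    have h2o : φ e = o := h2 e o he
    rw [ha, ← h1a, h2o]

lemma RAR.pdom_punion (ψ₁ ψ₂ : PReal E O) :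
    pdom (RAR.punion ψ₁ ψ₂) = pdom ψ₁ ∪ pdom ψ₂ := by
  ext e
  simp only [pdom, mem_filter, mem_univ, true_and, mem_union, RAR.punion]
  cases h : ψ₁ e <;> simp [h]

lemma RAR.subreal_punion_left (ψ₁ ψ₂ : PReal E O) : subreal ψ₁ (RAR.punion ψ₁ ψ₂) := by
  intro e o h; simp [RAR.punion, h]

lemma RAR.punion_update_right {φ : E → O} {ψ₁ : PReal E O} (ψ₂ : PReal E O) (e : E)
    (h1 : consistentR φ ψ₁) :
    RAR.punion ψ₁ (Function.update ψ₂ e (some (φ e)))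
      = Function.update (RAR.punion ψ₁ ψ₂) e (some (φ e)) := by
  funext e'
  by_cases h : e' = e
  · subst h
    rw [Function.update_self]
    simp only [RAR.punion, Function.update_self]
    cases hc : ψ₁ e' with
    | none => simp
    | some a => simp [h1 e' a hc]
  · rw [Function.update_of_ne h]
    simp only [RAR.punion, Function.update_of_ne h]

lemma RAR.le_prMass (p : (E → O) → ℝ) (hp : ∀ φ, 0 ≤ p φ) {φ : E → O} {ψ : PReal E O}
    (h : consistentR φ ψ) : p φ ≤ prMass p ψ :=
  Finset.single_le_sum (fun φ' _ => hp φ') (mem_filter.mpr ⟨mem_univ φ, h⟩)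

lemma RAR.marginal_mem_pdom (p : (E → O) → ℝ) (f : Finset E → (E → O) → ℝ)
    {e : E} {ψ : PReal E O} (h : e ∈ pdom ψ) : marginal p f e ψ = 0 := by
  simp [marginal, Finset.insert_eq_self.mpr h]

lemma RAR.marginal_le_max (p : (E → O) → ℝ) (f : Finset E → (E → O) → ℝ)
    (e : E) (ψ : PReal E O) : marginal p f e ψ ≤ maxMarginal p f ψ := by
  rw [maxMarginal]
  exact Finset.le_sup' (fun e => marginal p f e ψ) (mem_univ e)

lemma RAR.max_nonneg (p : (E → O) → ℝ) (f : Finset E → (E → O) → ℝ)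
    (hmono : AdaptiveMonotone p f) {ψ : PReal E O} (h : 0 < prMass p ψ) :
    0 ≤ maxMarginal p f ψ :=
  le_trans (hmono ψ h (Classical.arbitrary E)) (RAR.marginal_le_max p f _ ψ)

end Aux

section Aux2
variable {E O : Type*} [Fintype E] [Fintype O] [DecidableEq E] [Nonempty E]

lemma RAR.sum_class (p : (E → O) → ℝ) (hp : ∀ φ, 0 ≤ p φ)
    (c : (E → O) → PReal E O) (hc1 : ∀ φ, consistentR φ (c φ))
    (hc2 : ∀ φ φ', consistentR φ' (c φ) → c φ' = c φ)
    (F : (E → O) → (E → O) → ℝ)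
    (hF : ∀ φ φ', consistentR φ' (c φ) → F φ' = F φ) :
    ∑ φ : E → O, p φ *
      ((∑ φ' ∈ Finset.univ.filter (fun φ' => consistentR φ' (c φ)), p φ' * F φ φ')
        / prMass p (c φ))
    = ∑ φ : E → O, p φ * F φ φ := by
  have hfiber : ∀ φ₀ : E → O,
      (Finset.univ.filter (fun φ => c φ = c φ₀) : Finset (E → O))
        = Finset.univ.filter (fun φ => consistentR φ (c φ₀)) := by
    intro φ₀; ext φ; simp only [mem_filter, mem_univ, true_and]
    constructor
    · intro h; rw [← h]; exact hc1 φ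
    · intro h; exact hc2 φ₀ φ h
  rw [← Finset.sum_fiberwise Finset.univ c
    (fun φ => p φ * ((∑ φ' ∈ Finset.univ.filter (fun φ' => consistentR φ' (c φ)), p φ' * F φ φ') / prMass p (c φ)))]
  rw [← Finset.sum_fiberwise Finset.univ c (fun φ => p φ * F φ φ)]
  apply Finset.sum_congr rfl
  intro ψ _
  rcases Finset.eq_empty_or_nonempty (Finset.univ.filter (fun φ => c φ = ψ)) with he | ⟨φ₀, hφ₀⟩
  · rw [he]; simp
  have hcψ : c φ₀ = ψ := (Finset.mem_filter.mp hφ₀).2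
  subst hcψ
  -- rewrite the summand on the fiber
  have hL : ∀ φ ∈ Finset.univ.filter (fun φ => c φ = c φ₀),
      p φ * ((∑ φ' ∈ Finset.univ.filter (fun φ' => consistentR φ' (c φ)), p φ' * F φ φ') / prMass p (c φ))
      = p φ * ((∑ φ' ∈ Finset.univ.filter (fun φ' => consistentR φ' (c φ₀)), p φ' * F φ₀ φ') / prMass p (c φ₀)) := by
    intro φ hφ
    have hc : c φ = c φ₀ := (Finset.mem_filter.mp hφ).2
    have hcons : consistentR φ (c φ₀) := hc ▸ hc1 φ
    rw [hc, hF φ₀ φ hcons]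
  have hR : ∀ φ ∈ Finset.univ.filter (fun φ => c φ = c φ₀),
      p φ * F φ φ = p φ * F φ₀ φ := by
    intro φ hφ
    have hc : c φ = c φ₀ := (Finset.mem_filter.mp hφ).2
    rw [hF φ₀ φ (hc ▸ hc1 φ)]
  rw [Finset.sum_congr rfl hL, Finset.sum_congr rfl hR]
  rw [← Finset.sum_mul]
  rw [hfiber φ₀]
  have hmass : ∑ φ ∈ Finset.univ.filter (fun φ => consistentR φ (c φ₀)), p φ = prMass p (c φ₀) := rfl
  rw [hmass]
  rcases eq_or_ne (prMass p (c φ₀)) 0 with h0 | h0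
  · rw [h0, zero_mul]
    symm
    apply Finset.sum_eq_zero
    intro φ hφ
    have : ∀ φ' ∈ Finset.univ.filter (fun φ => consistentR φ (c φ₀)), p φ' = 0 := by
      intro φ' hφ'
      have := (Finset.sum_eq_zero_iff_of_nonneg (fun φ' _ => hp φ')).mp (hmass.trans h0)
      exact this φ' hφ'
    rw [this φ hφ, zero_mul]
  · rw [mul_div_cancel₀ _ h0]

lemma RAR.sum_step (p : (E → O) → ℝ) (hp : ∀ φ, 0 ≤ p φ)
    (f : Finset E → (E → O) → ℝ)
    (c : (E → O) → PReal E O) (hc1 : ∀ φ, consistentR φ (c φ))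
    (hc2 : ∀ φ φ', consistentR φ' (c φ) → c φ' = c φ)
    (sel : (E → O) → E)
    (hsel : ∀ φ φ', consistentR φ' (c φ) → sel φ' = sel φ) :
    ∑ φ : E → O, p φ * (f (insert (sel φ) (pdom (c φ))) φ - f (pdom (c φ)) φ)
      = ∑ φ : E → O, p φ * marginal p f (sel φ) (c φ) := by
  have h := RAR.sum_class p hp c hc1 hc2
      (fun φ φ' => f (insert (sel φ) (pdom (c φ))) φ' - f (pdom (c φ)) φ')
      (fun φ φ' hcc => by rw [hsel φ φ' hcc, hc2 φ φ' hcc])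
  rw [← h]
  apply Finset.sum_congr rfl
  intro φ _
  rw [marginal]

end Aux2

section Aux3
variable {E O : Type*} [Fintype E] [Fintype O] [DecidableEq E] [Nonempty E]

lemma RAR.pdom_runP_succ (π : Policy E O) (φ : E → O) (m : ℕ) :
    pdom (runP π φ (m + 1)) = insert (π (runP π φ m)) (pdom (runP π φ m)) := by
  show pdom (Function.update (runP π φ m) (π (runP π φ m)) (some (φ (π (runP π φ m)))))
      = insert (π (runP π φ m)) (pdom (runP π φ m))
  exact RAR.pdom_update _ _ _

lemma RAR.favg_succ (p : (E → O) → ℝ) (hp : ∀ φ, 0 ≤ p φ)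
    (f : Finset E → (E → O) → ℝ) (π : Policy E O) (m : ℕ) :
    favg p f π (m + 1) = favg p f π m +
      ∑ φ : E → O, p φ * marginal p f (π (runP π φ m)) (runP π φ m) := by
  have hstep := RAR.sum_step p hp f (fun φ => runP π φ m)
    (fun φ => RAR.consistent_runP π φ m)
    (fun φ φ' h => RAR.runP_eq_of_consistent π φ φ' m h)
    (fun φ => π (runP π φ m))
    (fun φ φ' h => by rw [RAR.runP_eq_of_consistent π φ φ' m h])
  rw [← hstep]
  simp only [favg]
  rw [← Finset.sum_add_distrib]
  apply Finset.sum_congr rfl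
  intro φ _
  rw [RAR.pdom_runP_succ π φ m]
  ring

lemma RAR.key_bound (p : (E → O) → ℝ) (hp : ∀ φ, 0 ≤ p φ)
    (f : Finset E → (E → O) → ℝ)
    (hmono : AdaptiveMonotone p f) (hsub : AdaptiveSubmodular p f)
    (π πstar : Policy E O) (r m : ℕ) :
    favg p f πstar r ≤ favg p f π m +
      r * ∑ φ : E → O, p φ * maxMarginal p f (runP π φ m) := by
  set M := ∑ φ : E → O, p φ * maxMarginal p f (runP π φ m) with hM
  -- Part 1: favg πstar r ≤ G k for all k, where
  -- G k = ∑ φ, p φ * f (pdom (punion (runP πstar φ r) (runP π φ k))) φ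
  have hG : ∀ k : ℕ, favg p f πstar r
      ≤ ∑ φ : E → O, p φ * f (pdom (RAR.punion (runP πstar φ r) (runP π φ k))) φ := by
    intro k
    induction k with
    | zero =>
      apply le_of_eq
      apply Finset.sum_congr rfl
      intro φ _
      have : runP π φ 0 = (fun _ => none) := rfl
      rw [this, RAR.punion_none]
    | succ k ih =>
      refine ih.trans ?_
      have hc1 : ∀ φ : E → O, consistentR φ (RAR.punion (runP πstar φ r) (runP π φ k)) :=
        fun φ => RAR.consistentR_punion (RAR.consistent_runP _ _ _) (RAR.consistent_runP _ _ _)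
      have hc2 : ∀ φ φ' : E → O, consistentR φ' (RAR.punion (runP πstar φ r) (runP π φ k)) →
          RAR.punion (runP πstar φ' r) (runP π φ' k) = RAR.punion (runP πstar φ r) (runP π φ k) := by
        intro φ φ' h
        have h1 := RAR.consistent_left_of_punion h
        have h2 := RAR.consistent_right_of_punion h (RAR.consistent_runP πstar φ r)
          (RAR.consistent_runP π φ k)
        rw [RAR.runP_eq_of_consistent πstar φ φ' r h1, RAR.runP_eq_of_consistent π φ φ' k h2]
      have hstep := RAR.sum_step p hp f
        (fun φ => RAR.punion (runP πstar φ r) (runP π φ k)) hc1 hc2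
        (fun φ => π (runP π φ k))
        (fun φ φ' h => by
          rw [RAR.runP_eq_of_consistent π φ φ' k (RAR.consistent_right_of_punion h
            (RAR.consistent_runP πstar φ r) (RAR.consistent_runP π φ k))])
      have hpd : ∀ φ : E → O, pdom (RAR.punion (runP πstar φ r) (runP π φ (k + 1)))
          = insert (π (runP π φ k)) (pdom (RAR.punion (runP πstar φ r) (runP π φ k))) := by
        intro φ
        have h1 : runP π φ (k + 1)
            = Function.update (runP π φ k) (π (runP π φ k)) (some (φ (π (runP π φ k)))) := rfl
        rw [h1, RAR.punion_update_right _ _ (RAR.consistent_runP πstar φ r), RAR.pdom_update]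
      have hdiff : ∑ φ : E → O, p φ * f (pdom (RAR.punion (runP πstar φ r) (runP π φ (k+1)))) φ
           - ∑ φ : E → O, p φ * f (pdom (RAR.punion (runP πstar φ r) (runP π φ k))) φ
           = ∑ φ : E → O, p φ * marginal p f (π (runP π φ k))
              (RAR.punion (runP πstar φ r) (runP π φ k)) := by
        rw [← hstep, ← Finset.sum_sub_distrib]
        apply Finset.sum_congr rfl
        intro φ _
        rw [hpd φ]
        ring
      have hnn : 0 ≤ ∑ φ : E → O, p φ * marginal p f (π (runP π φ k))
          (RAR.punion (runP πstar φ r) (runP π φ k)) := by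
        apply Finset.sum_nonneg
        intro φ _
        rcases (hp φ).eq_or_lt with h0 | h0
        · rw [← h0, zero_mul]
        · exact mul_nonneg (hp φ)
            (hmono _ (lt_of_lt_of_le h0 (RAR.le_prMass p hp (hc1 φ))) _)
      linarith
  -- Part 2: H chain
  have hH : ∀ j : ℕ, ∑ φ : E → O, p φ * f (pdom (RAR.punion (runP π φ m) (runP πstar φ j))) φ
      ≤ favg p f π m + j * M := by
    intro j
    induction j with
    | zero =>
      apply le_of_eq
      simp only [Nat.cast_zero, zero_mul, add_zero, favg]
      apply Finset.sum_congr rfl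
      intro φ _
      have : runP πstar φ 0 = (fun _ => none) := rfl
      rw [this, RAR.punion_none]
    | succ j ih =>
      have hc1 : ∀ φ : E → O, consistentR φ (RAR.punion (runP π φ m) (runP πstar φ j)) :=
        fun φ => RAR.consistentR_punion (RAR.consistent_runP _ _ _) (RAR.consistent_runP _ _ _)
      have hc2 : ∀ φ φ' : E → O, consistentR φ' (RAR.punion (runP π φ m) (runP πstar φ j)) →
          RAR.punion (runP π φ' m) (runP πstar φ' j) = RAR.punion (runP π φ m) (runP πstar φ j) := by
        intro φ φ' h
        have h1 := RAR.consistent_left_of_punion h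
        have h2 := RAR.consistent_right_of_punion h (RAR.consistent_runP π φ m)
          (RAR.consistent_runP πstar φ j)
        rw [RAR.runP_eq_of_consistent π φ φ' m h1, RAR.runP_eq_of_consistent πstar φ φ' j h2]
      have hstep := RAR.sum_step p hp f
        (fun φ => RAR.punion (runP π φ m) (runP πstar φ j)) hc1 hc2
        (fun φ => πstar (runP πstar φ j))
        (fun φ φ' h => by
          rw [RAR.runP_eq_of_consistent πstar φ φ' j (RAR.consistent_right_of_punion h
            (RAR.consistent_runP π φ m) (RAR.consistent_runP πstar φ j))])
      have hpd : ∀ φ : E → O, pdom (RAR.punion (runP π φ m) (runP πstar φ (j + 1)))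
          = insert (πstar (runP πstar φ j)) (pdom (RAR.punion (runP π φ m) (runP πstar φ j))) := by
        intro φ
        have h1 : runP πstar φ (j + 1)
            = Function.update (runP πstar φ j) (πstar (runP πstar φ j))
                (some (φ (πstar (runP πstar φ j)))) := rfl
        rw [h1, RAR.punion_update_right _ _ (RAR.consistent_runP π φ m), RAR.pdom_update]
      have hdiff : ∑ φ : E → O, p φ * f (pdom (RAR.punion (runP π φ m) (runP πstar φ (j+1)))) φ
           - ∑ φ : E → O, p φ * f (pdom (RAR.punion (runP π φ m) (runP πstar φ j))) φ
           = ∑ φ : E → O, p φ * marginal p f (πstar (runP πstar φ j))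
              (RAR.punion (runP π φ m) (runP πstar φ j)) := by
        rw [← hstep, ← Finset.sum_sub_distrib]
        apply Finset.sum_congr rfl
        intro φ _
        rw [hpd φ]
        ring
      have hle : ∑ φ : E → O, p φ * marginal p f (πstar (runP πstar φ j))
          (RAR.punion (runP π φ m) (runP πstar φ j)) ≤ M := by
        rw [hM]
        apply Finset.sum_le_sum
        intro φ _
        rcases (hp φ).eq_or_lt with h0 | h0
        · rw [← h0, zero_mul, zero_mul]
        · apply mul_le_mul_of_nonneg_left _ (hp φ)
          have hψpos : 0 < prMass p (runP π φ m) :=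
            lt_of_lt_of_le h0 (RAR.le_prMass p hp (RAR.consistent_runP π φ m))
          by_cases hmem : πstar (runP πstar φ j) ∈ pdom (RAR.punion (runP π φ m) (runP πstar φ j))
          · rw [RAR.marginal_mem_pdom p f hmem]
            exact RAR.max_nonneg p f hmono hψpos
          · exact le_trans
              (hsub _ _ (RAR.subreal_punion_left _ _) _ hmem)
              (RAR.marginal_le_max p f _ _)
      have : (↑(j+1) : ℝ) * M = ↑j * M + M := by push_cast; ring
      rw [this]
      linarith
  calc favg p f πstar r ≤ ∑ φ : E → O, p φ * f (pdom (RAR.punion (runP πstar φ r) (runP π φ m))) φ := hG m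
    _ = ∑ φ : E → O, p φ * f (pdom (RAR.punion (runP π φ m) (runP πstar φ r))) φ := by
        apply Finset.sum_congr rfl
        intro φ _
        rw [RAR.pdom_punion, RAR.pdom_punion, Finset.union_comm]
    _ ≤ favg p f π m + r * M := hH r

end Aux3

section Aux4
variable {E O : Type*} [Fintype E] [Fintype O] [DecidableEq E] [Nonempty E]

noncomputable def RAR.Ni (p : (E → O) → ℝ) (f : Finset E → (E → O) → ℝ)
    (π : Policy E O) (i : ℕ) : ℝ :=
  ∑ φ : E → O, p φ * marginal p f (π (runP π φ (i - 1))) (runP π φ (i - 1))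

noncomputable def RAR.Mi (p : (E → O) → ℝ) (f : Finset E → (E → O) → ℝ)
    (π : Policy E O) (i : ℕ) : ℝ :=
  ∑ φ : E → O, p φ * maxMarginal p f (runP π φ (i - 1))

end Aux4

/-- (Lemma 5) For a fixed value `ω` of the internal randomness, let
`X_i = E_Φ[Δ(π^ag_i(ω) | Ψ_{i-1}(ω,Φ))] / E_Φ[max_e Δ(e | Ψ_{i-1}(ω,Φ))]`.
If `f` is adaptive monotone and adaptive submodular, then the (now deterministic) policy
`π = π^ag(ω)` satisfies `f_avg(π_r) ≥ (1 − e^{−X̄})·f_avg(π*)` where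
`X̄ = (1/r) Σ_{i=1}^r X_i` and `π*` is any policy selecting at most `r` items. -/
theorem random_approx_ratio {E O : Type*} [Fintype E] [Fintype O] [DecidableEq E]
    [Nonempty E] (p : (E → O) → ℝ) (hp : ∀ φ, 0 ≤ p φ) (hp1 : ∑ φ : E → O, p φ = 1)
    (f : Finset E → (E → O) → ℝ) (hf : ∀ S φ, 0 ≤ f S φ)
    (hmono : AdaptiveMonotone p f) (hsub : AdaptiveSubmodular p f)
    (π πstar : Policy E O) (r : ℕ) (hr : 0 < r)
    (hpos : ∀ i ∈ Finset.Icc 1 r,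
      0 < ∑ φ : E → O, p φ * maxMarginal p f (runP π φ (i - 1))) :
    (1 - Real.exp (-((1 / r : ℝ) * ∑ i ∈ Finset.Icc 1 r,
          (∑ φ : E → O, p φ * marginal p f (π (runP π φ (i - 1))) (runP π φ (i - 1))) /
            (∑ φ : E → O, p φ * maxMarginal p f (runP π φ (i - 1)))))) *
        favg p f πstar r
      ≤ favg p f π r := by
  show (1 - Real.exp (-((1 / r : ℝ) * ∑ i ∈ Finset.Icc 1 r,
      RAR.Ni p f π i / RAR.Mi p f π i))) * favg p f πstar r ≤ favg p f π r
  have hr' : (0 : ℝ) < r := by exact_mod_cast hr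
  have hr1 : (1 : ℝ) ≤ r := by exact_mod_cast hr
  set A := favg p f πstar r with hA
  -- basic facts
  have hM : ∀ i ∈ Finset.Icc 1 r, 0 < RAR.Mi p f π i := hpos
  have hN0 : ∀ i : ℕ, 0 ≤ RAR.Ni p f π i := by
    intro i
    apply Finset.sum_nonneg
    intro φ _
    rcases (hp φ).eq_or_lt with h0 | h0
    · rw [← h0, zero_mul]
    · exact mul_nonneg (hp φ)
        (hmono _ (lt_of_lt_of_le h0 (RAR.le_prMass p hp (RAR.consistent_runP π φ _))) _)
  have hNM : ∀ i : ℕ, RAR.Ni p f π i ≤ RAR.Mi p f π i := by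
    intro i
    apply Finset.sum_le_sum
    intro φ _
    exact mul_le_mul_of_nonneg_left (RAR.marginal_le_max p f _ _) (hp φ)
  have hX0 : ∀ i ∈ Finset.Icc 1 r, 0 ≤ RAR.Ni p f π i / RAR.Mi p f π i :=
    fun i hi => div_nonneg (hN0 i) (hM i hi).le
  have hX1 : ∀ i ∈ Finset.Icc 1 r, RAR.Ni p f π i / RAR.Mi p f π i ≤ 1 :=
    fun i hi => (div_le_one (hM i hi)).mpr (hNM i)
  have hfac : ∀ i ∈ Finset.Icc 1 r, 0 ≤ 1 - RAR.Ni p f π i / RAR.Mi p f π i / r := by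
    intro i hi
    have h1 := hX0 i hi
    have h2 := hX1 i hi
    have : RAR.Ni p f π i / RAR.Mi p f π i / r ≤ 1 := by
      rw [div_le_one hr']
      linarith
    linarith
  -- step inequality
  have hstep : ∀ i ∈ Finset.Icc 1 r,
      A - favg p f π i ≤ (1 - RAR.Ni p f π i / RAR.Mi p f π i / r) * (A - favg p f π (i - 1)) := by
    intro i hi
    obtain ⟨hi1, hir⟩ := Finset.mem_Icc.mp hi
    have hrecur : favg p f π i = favg p f π (i - 1) + RAR.Ni p f π i := by
      have h := RAR.favg_succ p hp f π (i - 1)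
      have h2 : i - 1 + 1 = i := by omega
      rw [h2] at h
      exact h
    have hkey : A ≤ favg p f π (i - 1) + r * RAR.Mi p f π i :=
      RAR.key_bound p hp f hmono hsub π πstar r (i - 1)
    set x := RAR.Ni p f π i / RAR.Mi p f π i with hx
    set D := A - favg p f π (i - 1) with hD
    have hxM : x * RAR.Mi p f π i = RAR.Ni p f π i := div_mul_cancel₀ _ (hM i hi).ne'
    have hx0 : 0 ≤ x := hX0 i hi
    have hDr : D ≤ r * RAR.Mi p f π i := by rw [hD]; linarith
    have hy0 : 0 ≤ x / r := div_nonneg hx0 hr'.le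
    have hexpand : x / r * ((r : ℝ) * RAR.Mi p f π i - D)
        = x * RAR.Mi p f π i - x / r * D := by
      rw [mul_sub, ← mul_assoc, div_mul_cancel₀ x hr'.ne']
    have hnn : 0 ≤ x / r * ((r : ℝ) * RAR.Mi p f π i - D) :=
      mul_nonneg hy0 (by linarith)
    rw [hrecur]
    have : (1 - x / r) * D = D - x / r * D := by ring
    rw [this]
    rw [hexpand] at hnn
    linarith [hxM]
  -- chain
  have chain : ∀ k : ℕ, k ≤ r →
      A - favg p f π k ≤ (∏ i ∈ Finset.Icc 1 k, (1 - RAR.Ni p f π i / RAR.Mi p f π i / r))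
        * (A - favg p f π 0) := by
    intro k
    induction k with
    | zero => intro _; simp
    | succ k ih =>
      intro hk
      have hk' : k ≤ r := by omega
      have hmem : k + 1 ∈ Finset.Icc 1 r := Finset.mem_Icc.mpr ⟨by omega, hk⟩
      have h1 := hstep (k + 1) hmem
      have h2 : (k + 1 - 1 : ℕ) = k := by omega
      rw [h2] at h1
      have h3 := ih hk'
      have h4 : (1 - RAR.Ni p f π (k+1) / RAR.Mi p f π (k+1) / r) * (A - favg p f π k)
          ≤ (1 - RAR.Ni p f π (k+1) / RAR.Mi p f π (k+1) / r) *
            ((∏ i ∈ Finset.Icc 1 k, (1 - RAR.Ni p f π i / RAR.Mi p f π i / r))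
              * (A - favg p f π 0)) :=
        mul_le_mul_of_nonneg_left h3 (hfac (k+1) hmem)
      rw [Finset.prod_Icc_succ_top (by omega : 1 ≤ k + 1)]
      calc A - favg p f π (k+1) ≤ _ := h1
        _ ≤ _ := h4
        _ = _ := by ring
  -- product ≤ exp
  have hprodle : (∏ i ∈ Finset.Icc 1 r, (1 - RAR.Ni p f π i / RAR.Mi p f π i / r))
      ≤ Real.exp (-((1 / r : ℝ) * ∑ i ∈ Finset.Icc 1 r, RAR.Ni p f π i / RAR.Mi p f π i)) := by
    have h1 : (∏ i ∈ Finset.Icc 1 r, (1 - RAR.Ni p f π i / RAR.Mi p f π i / r))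
        ≤ ∏ i ∈ Finset.Icc 1 r, Real.exp (-(RAR.Ni p f π i / RAR.Mi p f π i / r)) := by
      apply Finset.prod_le_prod hfac
      intro i hi
      have := Real.add_one_le_exp (-(RAR.Ni p f π i / RAR.Mi p f π i / r))
      linarith
    rw [← Real.exp_sum] at h1
    have h2 : ∑ i ∈ Finset.Icc 1 r, -(RAR.Ni p f π i / RAR.Mi p f π i / r)
        = -((1 / r : ℝ) * ∑ i ∈ Finset.Icc 1 r, RAR.Ni p f π i / RAR.Mi p f π i) := by
      rw [Finset.sum_neg_distrib, ← Finset.sum_div]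
      ring
    rw [h2] at h1
    exact h1
  have hprod0 : 0 ≤ ∏ i ∈ Finset.Icc 1 r, (1 - RAR.Ni p f π i / RAR.Mi p f π i / r) :=
    Finset.prod_nonneg hfac
  have hA0 : 0 ≤ A := Finset.sum_nonneg fun φ _ => mul_nonneg (hp φ) (hf _ _)
  have hg0 : 0 ≤ favg p f π 0 := Finset.sum_nonneg fun φ _ => mul_nonneg (hp φ) (hf _ _)
  have hchainr := chain r le_rfl
  set Q := Real.exp (-((1 / r : ℝ) * ∑ i ∈ Finset.Icc 1 r, RAR.Ni p f π i / RAR.Mi p f π i))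
    with hQdef
  have hQ0 : 0 < Q := Real.exp_pos _
  rcases le_or_gt (A - favg p f π 0) 0 with h | h
  · have h5 : A - favg p f π r ≤ 0 :=
      le_trans hchainr (mul_nonpos_of_nonneg_of_nonpos hprod0 h)
    nlinarith
  · have h2 : (∏ i ∈ Finset.Icc 1 r, (1 - RAR.Ni p f π i / RAR.Mi p f π i / r))
        * (A - favg p f π 0) ≤ Q * (A - favg p f π 0) :=
      mul_le_mul_of_nonneg_right hprodle h.le
    have h3 : Q * (A - favg p f π 0) ≤ Q * A :=
      mul_le_mul_of_nonneg_left (by linarith) hQ0.le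
    have h5 : A - favg p f π r ≤ Q * A := le_trans hchainr (le_trans h2 h3)
    nlinarith
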